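/- The matrix F = A·Q₂⁻¹ satisfies (F − I)(F + I)(F² + I) = 0; hence F is diagonalizable with at most four distinct eigenvalues ±1, ±i. -/

import Mathlib

open Matrix Complex

/-- A 3×3 block matrix with blocks of sizes n, m, l. -/
def blk3 {n m l : ℕ}
    (M11 : Matrix (Fin n) (Fin n) ℝ) (M12 : Matrix (Fin n) (Fin m) ℝ) (M13 : Matrix (Fin n) (Fin l) ℝ)
    (M21 : Matrix (Fin m) (Fin n) ℝ) (M22 : Matrix (Fin m) (Fin m) ℝ) (M23 : Matrix (Fin m) (Fin l) ℝ)
    (M31 : Matrix (Fin l) (Fin n) ℝ) (M32 : Matrix (Fin l) (Fin m) ℝ) (M33 : Matrix (Fin l) (Fin l) ℝ) :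
    Matrix (Fin n ⊕ (Fin m ⊕ Fin l)) (Fin n ⊕ (Fin m ⊕ Fin l)) ℝ :=
  Matrix.fromBlocks M11
    (Matrix.of fun i j => Sum.elim (M12 i) (M13 i) j)
    (Matrix.of fun i j => Sum.elim (fun k => M21 k j) (fun k => M31 k j) i)
    (Matrix.fromBlocks M22 M23 M32 M33)

lemma blk3_mul {n m l : ℕ}
    (A11 : Matrix (Fin n) (Fin n) ℝ) (A12 : Matrix (Fin n) (Fin m) ℝ) (A13 : Matrix (Fin n) (Fin l) ℝ)
    (A21 : Matrix (Fin m) (Fin n) ℝ) (A22 : Matrix (Fin m) (Fin m) ℝ) (A23 : Matrix (Fin m) (Fin l) ℝ)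
    (A31 : Matrix (Fin l) (Fin n) ℝ) (A32 : Matrix (Fin l) (Fin m) ℝ) (A33 : Matrix (Fin l) (Fin l) ℝ)
    (B11 : Matrix (Fin n) (Fin n) ℝ) (B12 : Matrix (Fin n) (Fin m) ℝ) (B13 : Matrix (Fin n) (Fin l) ℝ)
    (B21 : Matrix (Fin m) (Fin n) ℝ) (B22 : Matrix (Fin m) (Fin m) ℝ) (B23 : Matrix (Fin m) (Fin l) ℝ)
    (B31 : Matrix (Fin l) (Fin n) ℝ) (B32 : Matrix (Fin l) (Fin m) ℝ) (B33 : Matrix (Fin l) (Fin l) ℝ) :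
    blk3 A11 A12 A13 A21 A22 A23 A31 A32 A33 * blk3 B11 B12 B13 B21 B22 B23 B31 B32 B33 =
    blk3 (A11*B11 + A12*B21 + A13*B31) (A11*B12 + A12*B22 + A13*B32) (A11*B13 + A12*B23 + A13*B33)
         (A21*B11 + A22*B21 + A23*B31) (A21*B12 + A22*B22 + A23*B32) (A21*B13 + A22*B23 + A23*B33)
         (A31*B11 + A32*B21 + A33*B31) (A31*B12 + A32*B22 + A33*B32) (A31*B13 + A32*B23 + A33*B33) := by
  ext i j
  rcases i with i | i | i <;> rcases j with j | j | j <;>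
    simp [blk3, Matrix.mul_apply, Fintype.sum_sum_type, Matrix.add_apply, add_assoc]

lemma blk3_one {n m l : ℕ} :
    (blk3 (1 : Matrix (Fin n) (Fin n) ℝ) 0 0 0 (1 : Matrix (Fin m) (Fin m) ℝ) 0 0 0
      (1 : Matrix (Fin l) (Fin l) ℝ)) = 1 := by
  ext i j
  rcases i with i | i | i <;> rcases j with j | j | j <;>
    simp [blk3, Matrix.one_apply]

lemma blk3_ext {n m l : ℕ}
    {A11 B11 : Matrix (Fin n) (Fin n) ℝ} {A12 B12 : Matrix (Fin n) (Fin m) ℝ} {A13 B13 : Matrix (Fin n) (Fin l) ℝ}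
    {A21 B21 : Matrix (Fin m) (Fin n) ℝ} {A22 B22 : Matrix (Fin m) (Fin m) ℝ} {A23 B23 : Matrix (Fin m) (Fin l) ℝ}
    {A31 B31 : Matrix (Fin l) (Fin n) ℝ} {A32 B32 : Matrix (Fin l) (Fin m) ℝ} {A33 B33 : Matrix (Fin l) (Fin l) ℝ}
    (h11 : A11 = B11) (h12 : A12 = B12) (h13 : A13 = B13)
    (h21 : A21 = B21) (h22 : A22 = B22) (h23 : A23 = B23)
    (h31 : A31 = B31) (h32 : A32 = B32) (h33 : A33 = B33) :
    blk3 A11 A12 A13 A21 A22 A23 A31 A32 A33 = blk3 B11 B12 B13 B21 B22 B23 B31 B32 B33 := by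
  rw [h11, h12, h13, h21, h22, h23, h31, h32, h33]

lemma mus_inj : Function.Injective (![(1:ℂ), -1, Complex.I, -Complex.I]) := by
  intro a b hab
  fin_cases a <;> fin_cases b <;>
    first
      | rfl
      | (exfalso; norm_num [Complex.ext_iff] at hab)

lemma posDef_mul_mul_transpose {p q : ℕ} {M : Matrix (Fin q) (Fin q) ℝ}
    (hM : M.PosDef) {B : Matrix (Fin p) (Fin q) ℝ} (hB : B.rank = p) :
    (B * M * Bᵀ).PosDef := by
  have hli : LinearIndependent ℝ B.row := by
    rw [linearIndependent_iff_card_eq_finrank_span, Set.finrank,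
      ← Matrix.rank_eq_finrank_span_row, hB, Fintype.card_fin]
  have hinj : Function.Injective B.vecMul := Matrix.vecMul_injective_iff.mpr hli
  refine Matrix.PosDef.of_dotProduct_mulVec_pos ?_ ?_
  · have h := (hM.posSemidef.mul_mul_conjTranspose_same B).1
    rwa [Matrix.conjTranspose_eq_transpose_of_trivial] at h
  · intro x hx
    have hy : B.vecMul x ≠ 0 := by
      intro h
      exact hx (hinj (by simpa using h))
    have e1 : (B * M * Bᵀ) *ᵥ x = B *ᵥ (M *ᵥ (B.vecMul x)) := by
      rw [← Matrix.mulVec_transpose]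
      simp [Matrix.mulVec_mulVec, Matrix.mul_assoc]
    have e2 : star x ⬝ᵥ ((B * M * Bᵀ) *ᵥ x) = star (B.vecMul x) ⬝ᵥ (M *ᵥ (B.vecMul x)) := by
      rw [e1, Matrix.dotProduct_mulVec]
      simp [star_trivial]
    rw [e2]
    exact hM.dotProduct_mulVec_pos hy

theorem stmt3 {n m l : ℕ} (A : Matrix (Fin n) (Fin n) ℝ) (B : Matrix (Fin m) (Fin n) ℝ)
    (C : Matrix (Fin l) (Fin m) ℝ) (hA : A.PosDef) (hB : B.rank = m) (hC : C.rank = l)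
    (S : Matrix (Fin m) (Fin m) ℝ) (hS : S = B * A⁻¹ * Bᵀ)
    (X : Matrix (Fin l) (Fin l) ℝ) (hX : X = C * S⁻¹ * Cᵀ)
    (𝒜 Q₂ : Matrix (Fin n ⊕ (Fin m ⊕ Fin l)) (Fin n ⊕ (Fin m ⊕ Fin l)) ℝ)
    (h𝒜 : 𝒜 = blk3 A Bᵀ 0 B 0 Cᵀ 0 C 0)
    (hQ : Q₂ = blk3 A Bᵀ 0 0 S Cᵀ 0 0 (-X))
    (F : Matrix (Fin n ⊕ (Fin m ⊕ Fin l)) (Fin n ⊕ (Fin m ⊕ Fin l)) ℝ)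
    (hF : F = 𝒜 * Q₂⁻¹) :
    (F - 1) * (F + 1) * (F ^ 2 + 1) = 0 ∧
    (∃ (P : Matrix (Fin n ⊕ (Fin m ⊕ Fin l)) (Fin n ⊕ (Fin m ⊕ Fin l)) ℂ)
        (d : (Fin n ⊕ (Fin m ⊕ Fin l)) → ℂ),
      IsUnit P.det ∧ F.map Complex.ofReal = P * Matrix.diagonal d * P⁻¹) ∧
    (∀ μ ∈ spectrum ℂ (F.map Complex.ofReal),
      μ = 1 ∨ μ = -1 ∨ μ = Complex.I ∨ μ = -Complex.I) := by
  -- invertibility facts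
  have hSpd : S.PosDef := by rw [hS]; exact posDef_mul_mul_transpose hA.inv hB
  have hXpd : X.PosDef := by rw [hX]; exact posDef_mul_mul_transpose hSpd.inv hC
  have hAd : IsUnit A.det := isUnit_iff_ne_zero.mpr hA.det_pos.ne'
  have hSd : IsUnit S.det := isUnit_iff_ne_zero.mpr hSpd.det_pos.ne'
  have hXd : IsUnit X.det := isUnit_iff_ne_zero.mpr hXpd.det_pos.ne'
  have rA : A * A⁻¹ = 1 := Matrix.mul_nonsing_inv A hAd
  have rS : B * A⁻¹ * Bᵀ = S := hS.symm
  have rSi : S * S⁻¹ = 1 := Matrix.mul_nonsing_inv S hSd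
  have rX : C * S⁻¹ * Cᵀ = X := hX.symm
  have rXi : X * X⁻¹ = 1 := Matrix.mul_nonsing_inv X hXd
  have rXi' : X⁻¹ * X = 1 := Matrix.nonsing_inv_mul X hXd
  -- explicit inverse of Q₂
  have hQE : Q₂ * blk3 A⁻¹ (-(A⁻¹ * Bᵀ * S⁻¹)) (-(A⁻¹ * Bᵀ * S⁻¹ * Cᵀ * X⁻¹))
      0 S⁻¹ (S⁻¹ * Cᵀ * X⁻¹) 0 0 (-X⁻¹) = 1 := by
    rw [hQ, blk3_mul, ← blk3_one]
    apply blk3_ext <;>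
      simp only [Matrix.mul_zero, Matrix.zero_mul, Matrix.mul_neg, Matrix.neg_mul,
        add_zero, zero_add, Matrix.mul_one, Matrix.one_mul, neg_neg, ← Matrix.mul_assoc,
        rA, rS, rSi, rX, rXi, one_mul, neg_add_cancel, add_neg_cancel] <;>
      abel
  have hQinv : Q₂⁻¹ = blk3 A⁻¹ (-(A⁻¹ * Bᵀ * S⁻¹)) (-(A⁻¹ * Bᵀ * S⁻¹ * Cᵀ * X⁻¹))
      0 S⁻¹ (S⁻¹ * Cᵀ * X⁻¹) 0 0 (-X⁻¹) := Matrix.inv_eq_right_inv hQE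
  -- explicit F
  have hFexp : F = blk3 1 0 0 (B * A⁻¹) (-1) (-(Cᵀ * X⁻¹ + Cᵀ * X⁻¹)) 0 (C * S⁻¹) 1 := by
    rw [hF, h𝒜, hQinv, blk3_mul]
    apply blk3_ext <;>
      simp only [Matrix.mul_zero, Matrix.zero_mul, Matrix.mul_neg, Matrix.neg_mul,
        add_zero, zero_add, Matrix.mul_one, Matrix.one_mul, neg_neg, ← Matrix.mul_assoc,
        rA, rS, rSi, rX, rXi, one_mul, neg_add_cancel, add_neg_cancel, neg_add] <;>
      abel
  -- F squared
  have hF2 : F * F = blk3 1 0 0 0 (1 - (Cᵀ * X⁻¹ * C * S⁻¹ + Cᵀ * X⁻¹ * C * S⁻¹)) 0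
      (C * S⁻¹ * B * A⁻¹) 0 (-1) := by
    rw [hFexp, blk3_mul]
    apply blk3_ext <;>
      simp only [Matrix.mul_zero, Matrix.zero_mul, Matrix.mul_neg, Matrix.neg_mul,
        add_zero, zero_add, Matrix.mul_one, Matrix.one_mul, neg_neg, Matrix.add_mul,
        Matrix.mul_add, ← Matrix.mul_assoc, rA, rS, rSi, rX, rXi, one_mul, neg_add,
        sub_eq_add_neg] <;>
      abel
  -- idempotent
  set W : Matrix (Fin m) (Fin m) ℝ := Cᵀ * X⁻¹ * C * S⁻¹ with hWdef
  have hW : W * W = W := by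
    have ha : W * W = Cᵀ * X⁻¹ * (C * S⁻¹ * Cᵀ) * (X⁻¹ * (C * S⁻¹)) := by
      simp only [hWdef, Matrix.mul_assoc]
    rw [ha, rX, Matrix.mul_assoc Cᵀ X⁻¹ X, rXi', Matrix.mul_one]
    simp only [hWdef, Matrix.mul_assoc]
  have hKK : (1 - (W + W)) * (1 - (W + W)) = 1 := by
    have expand : (1 - (W + W)) * (1 - (W + W)) =
        1 - (W + W) - (W + W) + (W * W + W * W + (W * W + W * W)) := by noncomm_ring
    rw [expand, hW]
    abel
  have hF4 : F ^ 4 = 1 := by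
    have h24 : F ^ 4 = (F * F) * (F * F) := by
      rw [show (4 : ℕ) = 2 * 2 by norm_num, pow_mul, sq, sq]
    rw [h24, hF2, blk3_mul, ← blk3_one]
    apply blk3_ext <;>
      simp only [Matrix.mul_zero, Matrix.zero_mul, Matrix.mul_neg, Matrix.neg_mul,
        add_zero, zero_add, Matrix.mul_one, Matrix.one_mul, neg_neg, hKK] <;>
      abel
  have goal1 : (F - 1) * (F + 1) * (F ^ 2 + 1) = 0 := by
    have hexp : (F - 1) * (F + 1) * (F ^ 2 + 1) = F ^ 4 - 1 := by noncomm_ring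
    rw [hexp, hF4, sub_self]
  -- complexification
  set Fc : Matrix (Fin n ⊕ (Fin m ⊕ Fin l)) (Fin n ⊕ (Fin m ⊕ Fin l)) ℂ :=
    F.map Complex.ofReal with hFcdef
  have hFc4 : Fc ^ 4 = 1 := by
    have h := map_pow (Complex.ofRealHom.mapMatrix :
      Matrix (Fin n ⊕ (Fin m ⊕ Fin l)) (Fin n ⊕ (Fin m ⊕ Fin l)) ℝ →+*
      Matrix (Fin n ⊕ (Fin m ⊕ Fin l)) (Fin n ⊕ (Fin m ⊕ Fin l)) ℂ) F 4
    rw [hF4] at h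
    rw [RingHom.map_one] at h
    exact h.symm
  set f : Module.End ℂ ((Fin n ⊕ (Fin m ⊕ Fin l)) → ℂ) := Matrix.toLinAlgEquiv' Fc with hfdef
  have hf4 : f ^ 4 = 1 := by
    rw [hfdef, ← map_pow, hFc4]
    exact _root_.map_one Matrix.toLinAlgEquiv'
  have haeval : (Polynomial.aeval f) ((Polynomial.X : Polynomial ℂ) ^ 4 - 1) = 0 := by
    simp [hf4]
  have hsq : Squarefree (Polynomial.X ^ 4 - 1 : Polynomial ℂ) := by
    have hsep : (Polynomial.X ^ 4 - Polynomial.C (1 : ℂ)).Separable :=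
      Polynomial.separable_X_pow_sub_C 1 (by norm_num) one_ne_zero
    rw [Polynomial.C_1] at hsep
    exact hsep.squarefree
  have hss : f.IsSemisimple := Module.End.isSemisimple_of_squarefree_aeval_eq_zero hsq haeval
  have heigtop : ⨆ μ : ℂ, f.eigenspace μ = ⊤ := by
    have h1 := Module.End.iSup_maxGenEigenspace_eq_top f
    simp_rw [hss.isFinitelySemisimple.maxGenEigenspace_eq_eigenspace] at h1
    exact h1
  have heigval : ∀ μ : ℂ, f.HasEigenvalue μ →
      μ = 1 ∨ μ = -1 ∨ μ = Complex.I ∨ μ = -Complex.I := by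
    intro μ hμ
    obtain ⟨v, hv⟩ := hμ.exists_hasEigenvector
    have h4 : (f ^ 4) v = μ ^ 4 • v := hv.pow_apply 4
    rw [hf4] at h4
    have hv4 : v = μ ^ 4 • v := by simpa using h4
    have hμ4 : μ ^ 4 = 1 := by
      by_contra hne
      have hz : (μ ^ 4 - 1) • v = 0 := by
        rw [sub_smul, one_smul, ← hv4, sub_self]
      rcases smul_eq_zero.mp hz with h | h
      · exact hne (sub_eq_zero.mp h)
      · exact hv.2 h
    have hz : (μ - 1) * ((μ + 1) * ((μ - Complex.I) * (μ + Complex.I))) = 0 := by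
      linear_combination hμ4 + (1 - μ ^ 2) * Complex.I_sq
    rcases mul_eq_zero.mp hz with h | h
    · exact Or.inl (sub_eq_zero.mp h)
    rcases mul_eq_zero.mp h with h | h
    · exact Or.inr (Or.inl (eq_neg_of_add_eq_zero_left h))
    rcases mul_eq_zero.mp h with h | h
    · exact Or.inr (Or.inr (Or.inl (sub_eq_zero.mp h)))
    · exact Or.inr (Or.inr (Or.inr (eq_neg_of_add_eq_zero_left h)))
  have hspec_eq : spectrum ℂ Fc = spectrum ℂ f :=
    (AlgEquiv.spectrum_eq Matrix.toLinAlgEquiv' Fc).symm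
  refine ⟨goal1, ?_, ?_⟩
  · -- diagonalization
    set μs : Fin 4 → ℂ := ![1, -1, Complex.I, -Complex.I] with hμs
    have hμinj : Function.Injective μs := mus_inj
    set Wk : Fin 4 → Submodule ℂ ((Fin n ⊕ (Fin m ⊕ Fin l)) → ℂ) :=
      fun i => f.eigenspace (μs i) with hWk
    have hWindep : iSupIndep Wk := f.eigenspaces_iSupIndep.comp hμinj
    have hWtop : ⨆ i, Wk i = ⊤ := by
      rw [← top_le_iff, ← heigtop]
      refine iSup_le fun μ => ?_
      by_cases hμ : f.HasEigenvalue μ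
      · rcases heigval μ hμ with h | h | h | h
        · rw [h]; exact le_iSup_of_le 0 (by simp [hWk, hμs])
        · rw [h]; exact le_iSup_of_le 1 (by simp [hWk, hμs])
        · rw [h]; exact le_iSup_of_le 2 (by simp [hWk, hμs])
        · rw [h]; exact le_iSup_of_le 3 (by simp [hWk, hμs])
      · have : f.eigenspace μ = ⊥ := by
          by_contra hne
          exact hμ (Module.End.hasEigenvalue_iff.mpr hne)
        simp [this]
    have hint : DirectSum.IsInternal Wk :=
      (DirectSum.isInternal_submodule_iff_iSupIndep_and_iSup_eq_top Wk).mpr ⟨hWindep, hWtop⟩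
    set bW : (i : Fin 4) → Module.Basis (Fin (Module.finrank ℂ (Wk i))) ℂ (Wk i) :=
      fun i => Module.finBasis ℂ (Wk i) with hbW
    set B0 := hint.collectedBasis bW with hB0
    have hcard : Fintype.card ((i : Fin 4) × Fin (Module.finrank ℂ (Wk i))) =
        Fintype.card (Fin n ⊕ (Fin m ⊕ Fin l)) := by
      rw [← Module.finrank_eq_card_basis B0, Module.finrank_pi]
    set e := Fintype.equivOfCardEq hcard with he
    set b := B0.reindex e with hb
    set d : (Fin n ⊕ (Fin m ⊕ Fin l)) → ℂ := fun k => μs (e.symm k).1 with hd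
    have hb_eigen : ∀ k, f (b k) = d k • b k := by
      intro k
      have hmem : (B0 (e.symm k) : (Fin n ⊕ (Fin m ⊕ Fin l)) → ℂ) ∈ Wk (e.symm k).1 :=
        hint.collectedBasis_mem bW (e.symm k)
      have h2 := Module.End.mem_eigenspace_iff.mp hmem
      simpa [hb, hd] using h2
    have hdiag : LinearMap.toMatrix b b f = Matrix.diagonal d := by
      ext i j
      rw [LinearMap.toMatrix_apply, hb_eigen j, _root_.map_smul, Module.Basis.repr_self]
      by_cases h : i = j
      · subst h; simp [Matrix.diagonal_apply]
      · simp [Matrix.diagonal_apply, h, Finsupp.single_apply, Ne.symm h]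
    set sb := Pi.basisFun ℂ (Fin n ⊕ (Fin m ⊕ Fin l)) with hsb
    have hP1 : sb.toMatrix ⇑b * b.toMatrix ⇑sb = 1 := Module.Basis.toMatrix_mul_toMatrix_flip sb b
    have hFc_eq : Fc = sb.toMatrix ⇑b * Matrix.diagonal d * b.toMatrix ⇑sb := by
      have h3 : sb.toMatrix ⇑b * LinearMap.toMatrix b b f * b.toMatrix ⇑sb =
          LinearMap.toMatrix sb sb f := by
        apply basis_toMatrix_mul_linearMap_toMatrix_mul_basis_toMatrix
      rw [hdiag] at h3
      rw [h3]
      show Fc = LinearMap.toMatrix (Pi.basisFun ℂ _) (Pi.basisFun ℂ _) f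
      rw [LinearMap.toMatrix_eq_toMatrix']
      exact (LinearMap.toMatrix'_toLin' Fc).symm
    refine ⟨sb.toMatrix ⇑b, d, Matrix.isUnit_det_of_right_inverse hP1, ?_⟩
    rw [Matrix.inv_eq_right_inv hP1]
    exact hFc_eq
  · intro μ hmem
    refine heigval μ ?_
    rw [Module.End.hasEigenvalue_iff_mem_spectrum, ← hspec_eq]
    exact hmem
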